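/- (Third-order accuracy of the perturbed WENO reconstruction.) Let h > 0 and let x_{i-1}, x_i, x_{i+1}, x_{i+2} be equally spaced with spacing h, and set x_{i+1/2} = x_i + h/2. Let z : ℝ → ℝ be three times continuously differentiable on [x_{i-1}, x_{i+2}] with |z''| ≤ M_2 and |z'''| ≤ M_3 there, and set z_j = z(x_j). Then the reconstructions satisfy the exact decompositions z^-_{i+1/2} = (-z_{i-1} + 6z_i + 3z_{i+1})/8 + C_1(z_{i-1} - 2z_i + z_{i+1}) and z^+_{i+1/2} = (3z_i + 6z_{i+1} - z_{i+2})/8 + C_2(z_i - 2z_{i+1} + z_{i+2}), where the first terms are the values at x_{i+1/2} of the quadratic interpolants through (x_{i-1}, x_i, x_{i+1}) and (x_i, x_{i+1}, x_{i+2}) respectively; moreover |z^-_{i+1/2} - z(x_{i+1/2})| ≤ (1/16)M_3 h³ + |C_1| M_2 h² and |z^+_{i+1/2} - z(x_{i+1/2})| ≤ (1/16)M_3 h³ + |C_2| M_2 h². In particular, if |C_1|, |C_2| ≤ K h for some K ≥ 0, then both reconstruction errors are at most (M_3/16 + K M_2) h³, i.e. the reconstruction is third-order accurate. -/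

import Mathlib

section WenoHelpers
open Set

lemma idw_Icc_eq {f : ℝ → ℝ} {lo hi x : ℝ} (hx : x ∈ Set.Ioo lo hi) (n : ℕ) :
    iteratedDerivWithin n f (Set.Icc lo hi) x = iteratedDeriv n f x := by
  rw [iteratedDerivWithin_eq_iteratedFDerivWithin, iteratedDeriv_eq_iteratedFDeriv,
    ← iteratedFDerivWithin_inter_open isOpen_Ioo hx,
    Set.inter_eq_self_of_subset_right Set.Ioo_subset_Icc_self,
    iteratedFDerivWithin_of_isOpen n isOpen_Ioo hx]

lemma iteratedDeriv_three (f : ℝ → ℝ) :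
    iteratedDeriv 3 f = deriv (deriv (deriv f)) := by
  rw [show (3:ℕ) = 2+1 from rfl, iteratedDeriv_succ,
    show (2:ℕ) = 1+1 from rfl, iteratedDeriv_succ,
    show (1:ℕ) = 0+1 from rfl, iteratedDeriv_succ, iteratedDeriv_zero]

lemma iteratedDeriv_two (f : ℝ → ℝ) :
    iteratedDeriv 2 f = deriv (deriv f) := by
  rw [show (2:ℕ) = 1+1 from rfl, iteratedDeriv_succ,
    show (1:ℕ) = 0+1 from rfl, iteratedDeriv_succ, iteratedDeriv_zero]

lemma rolle2 {F : ℝ → ℝ} {p0 p1 p2 : ℝ} (h01 : p0 < p1) (h12 : p1 < p2)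
    (hc : ContinuousOn F (Set.Icc p0 p2))
    (hd : ContDiffOn ℝ 2 F (Set.Ioo p0 p2))
    (h0 : F p0 = 0) (h1 : F p1 = 0) (h2 : F p2 = 0) :
    ∃ ξ ∈ Set.Ioo p0 p2, deriv (deriv F) ξ = 0 := by
  obtain ⟨a, ha, ha0⟩ := exists_deriv_eq_zero h01
    (hc.mono (Icc_subset_Icc le_rfl h12.le)) (h0.trans h1.symm)
  obtain ⟨b, hb, hb0⟩ := exists_deriv_eq_zero h12
    (hc.mono (Icc_subset_Icc h01.le le_rfl)) (h1.trans h2.symm)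
  have hder : ContinuousOn (deriv F) (Set.Ioo p0 p2) :=
    hd.continuousOn_deriv_of_isOpen isOpen_Ioo (by norm_num)
  obtain ⟨ξ, hξ, hξ0⟩ := exists_deriv_eq_zero (ha.2.trans hb.1)
    (hder.mono (Icc_subset_Ioo ha.1 hb.2)) (ha0.trans hb0.symm)
  exact ⟨ξ, ⟨ha.1.trans hξ.1, hξ.2.trans hb.2⟩, hξ0⟩

lemma rolle3 {F : ℝ → ℝ} {p0 p1 p2 p3 : ℝ} (h01 : p0 < p1) (h12 : p1 < p2) (h23 : p2 < p3)
    (hc : ContinuousOn F (Set.Icc p0 p3))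
    (hd : ContDiffOn ℝ 3 F (Set.Ioo p0 p3))
    (h0 : F p0 = 0) (h1 : F p1 = 0) (h2 : F p2 = 0) (h3 : F p3 = 0) :
    ∃ ξ ∈ Set.Ioo p0 p3, deriv (deriv (deriv F)) ξ = 0 := by
  obtain ⟨a, ha, ha0⟩ := exists_deriv_eq_zero h01
    (hc.mono (Icc_subset_Icc le_rfl (h12.trans h23).le)) (h0.trans h1.symm)
  obtain ⟨b, hb, hb0⟩ := exists_deriv_eq_zero h12
    (hc.mono (Icc_subset_Icc h01.le h23.le)) (h1.trans h2.symm)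
  obtain ⟨e, he, he0⟩ := exists_deriv_eq_zero h23
    (hc.mono (Icc_subset_Icc (h01.trans h12).le le_rfl)) (h2.trans h3.symm)
  have hd' : ContDiffOn ℝ 2 (deriv F) (Set.Ioo p0 p3) :=
    hd.deriv_of_isOpen isOpen_Ioo (by norm_num)
  have hsub : Set.Ioo a e ⊆ Set.Ioo p0 p3 := Ioo_subset_Ioo ha.1.le he.2.le
  obtain ⟨ξ, hξ, hξ0⟩ := rolle2 (ha.2.trans hb.1) (hb.2.trans he.1)
    (hd'.continuousOn.mono (Icc_subset_Ioo ha.1 he.2))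
    (hd'.mono hsub) ha0 hb0 he0
  exact ⟨ξ, ⟨ha.1.trans hξ.1, hξ.2.trans he.2⟩, hξ0⟩

lemma deriv3_sub_cubic {f : ℝ → ℝ} {s : Set ℝ} (hs : IsOpen s) (hf : ContDiffOn ℝ 3 f s)
    (K A B C : ℝ) {x : ℝ} (hx : x ∈ s) :
    deriv (deriv (deriv (fun y => f y - (K*y^3 + A*y^2 + B*y + C)))) x
      = deriv (deriv (deriv f)) x - 6*K := by
  have hd1 : ∀ y : ℝ, HasDerivAt (fun t => K*t^3 + A*t^2 + B*t + C)
      (3*K*y^2 + 2*A*y + B) y := by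
    intro y
    have := (((hasDerivAt_pow 3 y).const_mul K).add ((hasDerivAt_pow 2 y).const_mul A)).add
      (((hasDerivAt_id y).const_mul B).add (hasDerivAt_const y C))
    convert this using 1 <;>
      first
        | rfl
        | (funext t; simp only [id_eq, Pi.add_apply]; ring)
        | (push_cast; ring)
  have hd2 : ∀ y : ℝ, HasDerivAt (fun t => 3*K*t^2 + 2*A*t + B) (6*K*y + 2*A) y := by
    intro y
    have := (((hasDerivAt_pow 2 y).const_mul (3*K)).add
      (((hasDerivAt_id y).const_mul (2*A)).add (hasDerivAt_const y B)))
    convert this using 1 <;>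
      first
        | rfl
        | (funext t; simp only [id_eq, Pi.add_apply]; ring)
        | (push_cast; ring)
  have hd3 : ∀ y : ℝ, HasDerivAt (fun t => 6*K*t + 2*A) (6*K) y := by
    intro y
    have := ((hasDerivAt_id y).const_mul (6*K)).add (hasDerivAt_const y (2*A))
    convert this using 1 <;>
      first
        | rfl
        | (funext t; simp only [id_eq, Pi.add_apply]; ring)
        | (push_cast; ring)
  have hf1 : ContDiffOn ℝ 2 (deriv f) s := hf.deriv_of_isOpen hs (by norm_num)
  have hf2 : ContDiffOn ℝ 1 (deriv (deriv f)) s := hf1.deriv_of_isOpen hs (by norm_num)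
  have dfat : ∀ y ∈ s, DifferentiableAt ℝ f y := fun y hy =>
    (hf.differentiableOn (by norm_num) y hy).differentiableAt (hs.mem_nhds hy)
  have df1at : ∀ y ∈ s, DifferentiableAt ℝ (deriv f) y := fun y hy =>
    (hf1.differentiableOn (by norm_num) y hy).differentiableAt (hs.mem_nhds hy)
  have df2at : ∀ y ∈ s, DifferentiableAt ℝ (deriv (deriv f)) y := fun y hy =>
    (hf2.differentiableOn (by norm_num) y hy).differentiableAt (hs.mem_nhds hy)
  have E1 : ∀ y ∈ s, deriv (fun t => f t - (K*t^3 + A*t^2 + B*t + C)) y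
      = deriv f y - (3*K*y^2 + 2*A*y + B) := by
    intro y hy
    rw [deriv_fun_sub (dfat y hy) (hd1 y).differentiableAt, (hd1 y).deriv]
  have E2 : ∀ y ∈ s, deriv (deriv (fun t => f t - (K*t^3 + A*t^2 + B*t + C))) y
      = deriv (deriv f) y - (6*K*y + 2*A) := by
    intro y hy
    have hev : deriv (fun t => f t - (K*t^3 + A*t^2 + B*t + C))
        =ᶠ[nhds y] fun t => deriv f t - (3*K*t^2 + 2*A*t + B) :=
      Filter.eventuallyEq_of_mem (hs.mem_nhds hy) (fun t ht => E1 t ht)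
    rw [hev.deriv_eq, deriv_fun_sub (df1at y hy) (hd2 y).differentiableAt, (hd2 y).deriv]
  have hev2 : deriv (deriv (fun t => f t - (K*t^3 + A*t^2 + B*t + C)))
      =ᶠ[nhds x] fun t => deriv (deriv f) t - (6*K*t + 2*A) :=
    Filter.eventuallyEq_of_mem (hs.mem_nhds hx) (fun t ht => E2 t ht)
  rw [hev2.deriv_eq, deriv_fun_sub (df2at x hx) (hd3 x).differentiableAt, (hd3 x).deriv]

lemma deriv2_sub_quad {f : ℝ → ℝ} {s : Set ℝ} (hs : IsOpen s) (hf : ContDiffOn ℝ 2 f s)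
    (K B C : ℝ) {x : ℝ} (hx : x ∈ s) :
    deriv (deriv (fun y => f y - (K*y^2 + B*y + C))) x
      = deriv (deriv f) x - 2*K := by
  have hd1 : ∀ y : ℝ, HasDerivAt (fun t => K*t^2 + B*t + C) (2*K*y + B) y := by
    intro y
    have := ((hasDerivAt_pow 2 y).const_mul K).add
      (((hasDerivAt_id y).const_mul B).add (hasDerivAt_const y C))
    convert this using 1 <;>
      first
        | rfl
        | (funext t; simp only [id_eq, Pi.add_apply]; ring)
        | (push_cast; ring)
  have hd2 : ∀ y : ℝ, HasDerivAt (fun t => 2*K*t + B) (2*K) y := by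
    intro y
    have := ((hasDerivAt_id y).const_mul (2*K)).add (hasDerivAt_const y B)
    convert this using 1 <;>
      first
        | rfl
        | (funext t; simp only [id_eq, Pi.add_apply]; ring)
        | (push_cast; ring)
  have hf1 : ContDiffOn ℝ 1 (deriv f) s := hf.deriv_of_isOpen hs (by norm_num)
  have dfat : ∀ y ∈ s, DifferentiableAt ℝ f y := fun y hy =>
    (hf.differentiableOn (by norm_num) y hy).differentiableAt (hs.mem_nhds hy)
  have df1at : ∀ y ∈ s, DifferentiableAt ℝ (deriv f) y := fun y hy =>
    (hf1.differentiableOn (by norm_num) y hy).differentiableAt (hs.mem_nhds hy)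
  have E1 : ∀ y ∈ s, deriv (fun t => f t - (K*t^2 + B*t + C)) y
      = deriv f y - (2*K*y + B) := by
    intro y hy
    rw [deriv_fun_sub (dfat y hy) (hd1 y).differentiableAt, (hd1 y).deriv]
  have hev : deriv (fun t => f t - (K*t^2 + B*t + C))
      =ᶠ[nhds x] fun t => deriv f t - (2*K*t + B) :=
    Filter.eventuallyEq_of_mem (hs.mem_nhds hx) (fun t ht => E1 t ht)
  rw [hev.deriv_eq, deriv_fun_sub (df1at x hx) (hd2 x).differentiableAt, (hd2 x).deriv]
lemma quad_interp_bound {f : ℝ → ℝ} {lo hi M3 : ℝ} (hf : ContDiffOn ℝ 3 f (Set.Icc lo hi))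
    (hM : ∀ x ∈ Set.Icc lo hi, |iteratedDerivWithin 3 f (Set.Icc lo hi) x| ≤ M3)
    {n0 n1 n2 c : ℝ} (h01 : n0 < n1) (h12 : n1 < n2) (hlo : lo ≤ n0) (hhi : n2 ≤ hi)
    (hc0 : n0 < c) (hc2 : c < n2) (hc1 : c ≠ n1) :
    |f c - (f n0 * ((c-n1)*(c-n2))/((n0-n1)*(n0-n2))
          + f n1 * ((c-n0)*(c-n2))/((n1-n0)*(n1-n2))
          + f n2 * ((c-n0)*(c-n1))/((n2-n0)*(n2-n1)))|
      ≤ M3/6 * |(c-n0)*(c-n1)*(c-n2)| := by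
  have d01 : n0 - n1 ≠ 0 := sub_ne_zero.2 h01.ne
  have d02 : n0 - n2 ≠ 0 := sub_ne_zero.2 (h01.trans h12).ne
  have d10 : n1 - n0 ≠ 0 := sub_ne_zero.2 h01.ne'
  have d12 : n1 - n2 ≠ 0 := sub_ne_zero.2 h12.ne
  have d20 : n2 - n0 ≠ 0 := sub_ne_zero.2 (h01.trans h12).ne'
  have d21 : n2 - n1 ≠ 0 := sub_ne_zero.2 h12.ne'
  have hc0' : c - n0 ≠ 0 := sub_ne_zero.2 hc0.ne'
  have hc1' : c - n1 ≠ 0 := sub_ne_zero.2 hc1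
  have hc2' : c - n2 ≠ 0 := sub_ne_zero.2 hc2.ne
  set Lc := f n0 * ((c-n1)*(c-n2))/((n0-n1)*(n0-n2))
          + f n1 * ((c-n0)*(c-n2))/((n1-n0)*(n1-n2))
          + f n2 * ((c-n0)*(c-n1))/((n2-n0)*(n2-n1)) with hLc
  set ωc := (c-n0)*(c-n1)*(c-n2) with hωc
  have hωne : ωc ≠ 0 := mul_ne_zero (mul_ne_zero hc0' hc1') hc2'
  set K := (f c - Lc) / ωc with hK
  set α0 := f n0 / ((n0-n1)*(n0-n2)) with hα0
  set α1 := f n1 / ((n1-n0)*(n1-n2)) with hα1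
  set α2 := f n2 / ((n2-n0)*(n2-n1)) with hα2
  set A := α0 + α1 + α2 - K*(n0+n1+n2) with hA
  set B := K*(n0*n1+n0*n2+n1*n2) - (α0*(n1+n2)+α1*(n0+n2)+α2*(n0+n1)) with hB
  set C0 := α0*(n1*n2)+α1*(n0*n2)+α2*(n0*n1) - K*(n0*n1*n2) with hC0
  have hpoly : ∀ y : ℝ, K*y^3 + A*y^2 + B*y + C0
      = f n0 * ((y-n1)*(y-n2))/((n0-n1)*(n0-n2))
      + f n1 * ((y-n0)*(y-n2))/((n1-n0)*(n1-n2))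
      + f n2 * ((y-n0)*(y-n1))/((n2-n0)*(n2-n1))
      + K*((y-n0)*(y-n1)*(y-n2)) := by
    intro y; rw [hA, hB, hC0, hα0, hα1, hα2]; ring
  set F := fun y => f y - (K*y^3 + A*y^2 + B*y + C0) with hF
  have z0 : F n0 = 0 := by
    simp only [hF]; rw [hpoly n0]; field_simp; ring
  have z1 : F n1 = 0 := by
    simp only [hF]; rw [hpoly n1]; field_simp; ring
  have z2 : F n2 = 0 := by
    simp only [hF]; rw [hpoly n2]; field_simp; ring
  have zc : F c = 0 := by
    simp only [hF]; rw [hpoly c, ← hLc, ← hωc, hK, div_mul_cancel₀ _ hωne]; ring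
  have hsub : Set.Icc n0 n2 ⊆ Set.Icc lo hi := Icc_subset_Icc hlo hhi
  have hp3 : ContDiff ℝ 3 (fun y : ℝ => K*y^3 + A*y^2 + B*y + C0) := by fun_prop
  have hFc : ContinuousOn F (Set.Icc n0 n2) :=
    (hf.continuousOn.mono hsub).sub hp3.continuous.continuousOn
  have hFd : ContDiffOn ℝ 3 F (Set.Ioo n0 n2) :=
    (hf.mono (Ioo_subset_Icc_self.trans hsub)).sub hp3.contDiffOn
  have hroll : ∃ ξ ∈ Set.Ioo n0 n2, deriv (deriv (deriv F)) ξ = 0 := by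
    rcases lt_or_gt_of_ne hc1 with hlt | hgt
    · obtain ⟨ξ, hξ, h0⟩ := rolle3 hc0 hlt h12 hFc hFd z0 zc z1 z2
      exact ⟨ξ, hξ, h0⟩
    · obtain ⟨ξ, hξ, h0⟩ := rolle3 h01 hgt hc2 hFc hFd z0 z1 zc z2
      exact ⟨ξ, hξ, h0⟩
  obtain ⟨ξ, hξ, hξ0⟩ := hroll
  have hlohi : lo < hi := lt_of_le_of_lt hlo (lt_of_lt_of_le (h01.trans h12) hhi)
  have hξint : ξ ∈ Set.Ioo lo hi :=
    ⟨lt_of_le_of_lt hlo hξ.1, lt_of_lt_of_le hξ.2 hhi⟩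
  have hder : deriv (deriv (deriv F)) ξ = deriv (deriv (deriv f)) ξ - 6*K := by
    simp only [hF]
    exact deriv3_sub_cubic isOpen_Ioo (hf.mono Ioo_subset_Icc_self) K A B C0 hξint
  have h6K : deriv (deriv (deriv f)) ξ = 6*K := by
    have := hder; rw [hξ0] at this; linarith
  have hbd : |6*K| ≤ M3 := by
    have := hM ξ (Ioo_subset_Icc_self hξint)
    rwa [idw_Icc_eq hξint 3, iteratedDeriv_three, h6K] at this
  have hKbd : |K| ≤ M3/6 := by
    rw [abs_mul, abs_of_nonneg (by norm_num : (0:ℝ) ≤ 6)] at hbd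
    linarith
  have hEq : f c - Lc = K * ωc := (div_mul_cancel₀ _ hωne).symm
  calc |f c - Lc| = |K| * |ωc| := by rw [hEq, abs_mul]
    _ ≤ M3/6 * |ωc| := mul_le_mul_of_nonneg_right hKbd (abs_nonneg _)

lemma lin_interp_bound {f : ℝ → ℝ} {lo hi M2 : ℝ} (hf : ContDiffOn ℝ 2 f (Set.Icc lo hi))
    (hM : ∀ x ∈ Set.Icc lo hi, |iteratedDerivWithin 2 f (Set.Icc lo hi) x| ≤ M2)
    {n0 n2 c : ℝ} (hlo : lo ≤ n0) (hhi : n2 ≤ hi)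
    (hc0 : n0 < c) (hc2 : c < n2) :
    |f c - (f n0 * (c-n2)/(n0-n2) + f n2 * (c-n0)/(n2-n0))|
      ≤ M2/2 * |(c-n0)*(c-n2)| := by
  have h02 : n0 < n2 := hc0.trans hc2
  have d02 : n0 - n2 ≠ 0 := sub_ne_zero.2 h02.ne
  have d20 : n2 - n0 ≠ 0 := sub_ne_zero.2 h02.ne'
  have hc0' : c - n0 ≠ 0 := sub_ne_zero.2 hc0.ne'
  have hc2' : c - n2 ≠ 0 := sub_ne_zero.2 hc2.ne
  set Lc := f n0 * (c-n2)/(n0-n2) + f n2 * (c-n0)/(n2-n0) with hLc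
  set ωc := (c-n0)*(c-n2) with hωc
  have hωne : ωc ≠ 0 := mul_ne_zero hc0' hc2'
  set K := (f c - Lc) / ωc with hK
  set α0 := f n0 / (n0-n2) with hα0
  set α2 := f n2 / (n2-n0) with hα2
  set B := α0 + α2 - K*(n0+n2) with hB
  set C0 := -(α0*n2) - α2*n0 + K*(n0*n2) with hC0
  have hpoly : ∀ y : ℝ, K*y^2 + B*y + C0
      = f n0 * (y-n2)/(n0-n2) + f n2 * (y-n0)/(n2-n0) + K*((y-n0)*(y-n2)) := by
    intro y; rw [hB, hC0, hα0, hα2]; ring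
  set F := fun y => f y - (K*y^2 + B*y + C0) with hF
  have z0 : F n0 = 0 := by simp only [hF]; rw [hpoly n0]; field_simp; ring
  have z2 : F n2 = 0 := by simp only [hF]; rw [hpoly n2]; field_simp; ring
  have zc : F c = 0 := by
    simp only [hF]; rw [hpoly c, ← hLc, ← hωc, hK, div_mul_cancel₀ _ hωne]; ring
  have hsub : Set.Icc n0 n2 ⊆ Set.Icc lo hi := Icc_subset_Icc hlo hhi
  have hp2 : ContDiff ℝ 2 (fun y : ℝ => K*y^2 + B*y + C0) := by fun_prop
  have hFc : ContinuousOn F (Set.Icc n0 n2) :=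
    (hf.continuousOn.mono hsub).sub hp2.continuous.continuousOn
  have hFd : ContDiffOn ℝ 2 F (Set.Ioo n0 n2) :=
    (hf.mono (Ioo_subset_Icc_self.trans hsub)).sub hp2.contDiffOn
  obtain ⟨ξ, hξ, hξ0⟩ := rolle2 hc0 hc2 hFc hFd z0 zc z2
  have hξint : ξ ∈ Set.Ioo lo hi :=
    ⟨lt_of_le_of_lt hlo hξ.1, lt_of_lt_of_le hξ.2 hhi⟩
  have hder : deriv (deriv F) ξ = deriv (deriv f) ξ - 2*K := by
    simp only [hF]
    exact deriv2_sub_quad isOpen_Ioo (hf.mono Ioo_subset_Icc_self) K B C0 hξint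
  have h2K : deriv (deriv f) ξ = 2*K := by
    have := hder; rw [hξ0] at this; linarith
  have hbd : |2*K| ≤ M2 := by
    have := hM ξ (Ioo_subset_Icc_self hξint)
    rwa [idw_Icc_eq hξint 2, iteratedDeriv_two, h2K] at this
  have hKbd : |K| ≤ M2/2 := by
    rw [abs_mul, abs_of_nonneg (by norm_num : (0:ℝ) ≤ 2)] at hbd
    linarith
  have hEq : f c - Lc = K * ωc := (div_mul_cancel₀ _ hωne).symm
  calc |f c - Lc| = |K| * |ωc| := by rw [hEq, abs_mul]
    _ ≤ M2/2 * |ωc| := mul_le_mul_of_nonneg_right hKbd (abs_nonneg _)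

end WenoHelpers

set_option maxHeartbeats 1000000


/-- Third-order accuracy of the perturbed WENO reconstruction:
with equally spaced points `x_{i-1} = x_i - h`, `x_{i+1} = x_i + h`,
`x_{i+2} = x_i + 2h` and `x_{i+1/2} = x_i + h/2`, and `z` three times
continuously differentiable on `[x_{i-1}, x_{i+2}]` with `|z''| ≤ M₂`,
`|z'''| ≤ M₃` there: the reconstructions decompose exactly as
`z⁻ = (-z_{i-1} + 6z_i + 3z_{i+1})/8 + C₁(z_{i-1} - 2z_i + z_{i+1})` and
`z⁺ = (3z_i + 6z_{i+1} - z_{i+2})/8 + C₂(z_i - 2z_{i+1} + z_{i+2})`, whose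
first terms are the values at `x_{i+1/2}` of the quadratic (Lagrange)
interpolants through `(x_{i-1}, x_i, x_{i+1})` and `(x_i, x_{i+1}, x_{i+2})`;
the errors satisfy `|z⁻ - z(x_{i+1/2})| ≤ (1/16)M₃h³ + |C₁|M₂h²` and
`|z⁺ - z(x_{i+1/2})| ≤ (1/16)M₃h³ + |C₂|M₂h²`; in particular if
`|C₁|, |C₂| ≤ Kh` then both errors are at most `(M₃/16 + KM₂)h³`. -/
theorem weno_third_order_accuracy (h : ℝ) (hh : 0 < h) (xi : ℝ)
    (z : ℝ → ℝ) (M2 M3 : ℝ)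
    (hz : ContDiffOn ℝ 3 z (Set.Icc (xi - h) (xi + 2*h)))
    (hM2 : ∀ x ∈ Set.Icc (xi - h) (xi + 2*h),
      |iteratedDerivWithin 2 z (Set.Icc (xi - h) (xi + 2*h)) x| ≤ M2)
    (hM3 : ∀ x ∈ Set.Icc (xi - h) (xi + 2*h),
      |iteratedDerivWithin 3 z (Set.Icc (xi - h) (xi + 2*h)) x| ≤ M3)
    (C1 C2 : ℝ) :
    -- exact decomposition of the left reconstruction
    ((3/4 + 2*C1)*(z xi + z (xi + h)) + (1/4 - 2*C1)*(3*(z xi) - z (xi - h)))/2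
      = (-(z (xi - h)) + 6*(z xi) + 3*(z (xi + h)))/8
        + C1*(z (xi - h) - 2*(z xi) + z (xi + h)) ∧
    -- exact decomposition of the right reconstruction
    ((1/4 - 2*C2)*(3*(z (xi + h)) - z (xi + 2*h))
        + (3/4 + 2*C2)*(z xi + z (xi + h)))/2
      = (3*(z xi) + 6*(z (xi + h)) - z (xi + 2*h))/8
        + C2*(z xi - 2*(z (xi + h)) + z (xi + 2*h)) ∧
    -- the first term is the quadratic Lagrange interpolant through
    -- (x_{i-1}, x_i, x_{i+1}) evaluated at x_{i+1/2}
    (-(z (xi - h)) + 6*(z xi) + 3*(z (xi + h)))/8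
      = z (xi - h) * (((xi + h/2) - xi)*((xi + h/2) - (xi + h)))
          / (((xi - h) - xi)*((xi - h) - (xi + h)))
        + z xi * (((xi + h/2) - (xi - h))*((xi + h/2) - (xi + h)))
          / ((xi - (xi - h))*(xi - (xi + h)))
        + z (xi + h) * (((xi + h/2) - (xi - h))*((xi + h/2) - xi))
          / (((xi + h) - (xi - h))*((xi + h) - xi)) ∧
    -- the first term is the quadratic Lagrange interpolant through
    -- (x_i, x_{i+1}, x_{i+2}) evaluated at x_{i+1/2}
    (3*(z xi) + 6*(z (xi + h)) - z (xi + 2*h))/8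
      = z xi * (((xi + h/2) - (xi + h))*((xi + h/2) - (xi + 2*h)))
          / ((xi - (xi + h))*(xi - (xi + 2*h)))
        + z (xi + h) * (((xi + h/2) - xi)*((xi + h/2) - (xi + 2*h)))
          / (((xi + h) - xi)*((xi + h) - (xi + 2*h)))
        + z (xi + 2*h) * (((xi + h/2) - xi)*((xi + h/2) - (xi + h)))
          / (((xi + 2*h) - xi)*((xi + 2*h) - (xi + h))) ∧
    -- third-order error bounds
    |((3/4 + 2*C1)*(z xi + z (xi + h)) + (1/4 - 2*C1)*(3*(z xi) - z (xi - h)))/2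
        - z (xi + h/2)|
      ≤ (1/16)*M3*h^3 + |C1| * M2 * h^2 ∧
    |((1/4 - 2*C2)*(3*(z (xi + h)) - z (xi + 2*h))
        + (3/4 + 2*C2)*(z xi + z (xi + h)))/2 - z (xi + h/2)|
      ≤ (1/16)*M3*h^3 + |C2| * M2 * h^2 ∧
    -- if |C₁|, |C₂| ≤ Kh then both errors are O(h³)
    (∀ K : ℝ, 0 ≤ K → |C1| ≤ K*h → |C2| ≤ K*h →
      |((3/4 + 2*C1)*(z xi + z (xi + h))
          + (1/4 - 2*C1)*(3*(z xi) - z (xi - h)))/2 - z (xi + h/2)|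
        ≤ (M3/16 + K*M2)*h^3 ∧
      |((1/4 - 2*C2)*(3*(z (xi + h)) - z (xi + 2*h))
          + (3/4 + 2*C2)*(z xi + z (xi + h)))/2 - z (xi + h/2)|
        ≤ (M3/16 + K*M2)*h^3) := by
  have hne : h ≠ 0 := hh.ne'
  have h2pos : (0:ℝ) < h^2 := pow_pos hh 2
  have h3pos : (0:ℝ) < h^3 := pow_pos hh 3
  have hz2 : ContDiffOn ℝ 2 z (Set.Icc (xi - h) (xi + 2*h)) :=
    hz.of_le (by norm_num)
  -- nonzero differences
  have e1 : (xi - h) - xi ≠ 0 := by intro q; apply hne; linarith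
  have e2 : (xi - h) - (xi + h) ≠ 0 := by intro q; apply hne; linarith
  have e3 : xi - (xi - h) ≠ 0 := by intro q; apply hne; linarith
  have e4 : xi - (xi + h) ≠ 0 := by intro q; apply hne; linarith
  have e5 : (xi + h) - (xi - h) ≠ 0 := by intro q; apply hne; linarith
  have e6 : (xi + h) - xi ≠ 0 := by intro q; apply hne; linarith
  have e7 : xi - (xi + 2*h) ≠ 0 := by intro q; apply hne; linarith
  have e8 : (xi + h) - (xi + 2*h) ≠ 0 := by intro q; apply hne; linarith
  have e9 : (xi + 2*h) - xi ≠ 0 := by intro q; apply hne; linarith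
  have e10 : (xi + 2*h) - (xi + h) ≠ 0 := by intro q; apply hne; linarith
  -- conjunct 3
  have eq3 : (-(z (xi - h)) + 6*(z xi) + 3*(z (xi + h)))/8
      = z (xi - h) * (((xi + h/2) - xi)*((xi + h/2) - (xi + h)))
          / (((xi - h) - xi)*((xi - h) - (xi + h)))
        + z xi * (((xi + h/2) - (xi - h))*((xi + h/2) - (xi + h)))
          / ((xi - (xi - h))*(xi - (xi + h)))
        + z (xi + h) * (((xi + h/2) - (xi - h))*((xi + h/2) - xi))
          / (((xi + h) - (xi - h))*((xi + h) - xi)) := by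
    rw [show ((xi - h) - xi)*((xi - h) - (xi + h)) = 2*h^2 from by ring,
      show (xi - (xi - h))*(xi - (xi + h)) = -(h^2) from by ring,
      show ((xi + h) - (xi - h))*((xi + h) - xi) = 2*h^2 from by ring]
    field_simp
    ring
  have eq4 : (3*(z xi) + 6*(z (xi + h)) - z (xi + 2*h))/8
      = z xi * (((xi + h/2) - (xi + h))*((xi + h/2) - (xi + 2*h)))
          / ((xi - (xi + h))*(xi - (xi + 2*h)))
        + z (xi + h) * (((xi + h/2) - xi)*((xi + h/2) - (xi + 2*h)))
          / (((xi + h) - xi)*((xi + h) - (xi + 2*h)))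
        + z (xi + 2*h) * (((xi + h/2) - xi)*((xi + h/2) - (xi + h)))
          / (((xi + 2*h) - xi)*((xi + 2*h) - (xi + h))) := by
    rw [show (xi - (xi + h))*(xi - (xi + 2*h)) = 2*h^2 from by ring,
      show ((xi + h) - xi)*((xi + h) - (xi + 2*h)) = -(h^2) from by ring,
      show ((xi + 2*h) - xi)*((xi + 2*h) - (xi + h)) = 2*h^2 from by ring]
    field_simp
    ring
  -- Lagrange error, left stencil
  have hqL : |z (xi + h/2) - ((-(z (xi - h)) + 6*(z xi) + 3*(z (xi + h)))/8)|
      ≤ (1/16)*M3*h^3 := by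
    rw [eq3]
    have hq := quad_interp_bound hz hM3
      (show xi - h < xi by linarith) (show xi < xi + h by linarith)
      (le_refl (xi - h)) (by linarith : xi + h ≤ xi + 2*h)
      (by linarith : xi - h < xi + h/2) (by linarith : xi + h/2 < xi + h)
      (by intro q; apply hne; linarith : xi + h/2 ≠ xi)
    have hω : |((xi + h/2) - (xi - h)) * ((xi + h/2) - xi) * ((xi + h/2) - (xi + h))|
        = 3*h^3/8 := by
      have : ((xi + h/2) - (xi - h)) * ((xi + h/2) - xi) * ((xi + h/2) - (xi + h))
          = -(3*h^3/8) := by ring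
      rw [this, abs_neg, abs_of_nonneg (by linarith)]
    rw [hω] at hq
    calc |z (xi + h/2) - _| ≤ M3/6 * (3*h^3/8) := hq
      _ = (1/16)*M3*h^3 := by ring
  -- Lagrange error, right stencil
  have hqR : |z (xi + h/2) - ((3*(z xi) + 6*(z (xi + h)) - z (xi + 2*h))/8)|
      ≤ (1/16)*M3*h^3 := by
    rw [eq4]
    have hq := quad_interp_bound hz hM3
      (show xi < xi + h by linarith) (show xi + h < xi + 2*h by linarith)
      (by linarith : xi - h ≤ xi) (le_refl (xi + 2*h))
      (by linarith : xi < xi + h/2) (by linarith : xi + h/2 < xi + 2*h)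
      (by intro q; apply hne; linarith : xi + h/2 ≠ xi + h)
    have hω : |((xi + h/2) - xi) * ((xi + h/2) - (xi + h)) * ((xi + h/2) - (xi + 2*h))|
        = 3*h^3/8 := by
      have : ((xi + h/2) - xi) * ((xi + h/2) - (xi + h)) * ((xi + h/2) - (xi + 2*h))
          = 3*h^3/8 := by ring
      rw [this, abs_of_nonneg (by linarith)]
    rw [hω] at hq
    calc |z (xi + h/2) - _| ≤ M3/6 * (3*h^3/8) := hq
      _ = (1/16)*M3*h^3 := by ring
  -- second differences
  have hΔL : |z (xi - h) - 2*(z xi) + z (xi + h)| ≤ M2*h^2 := by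
    have hl := lin_interp_bound hz2 hM2
      (le_refl (xi - h)) (by linarith : xi + h ≤ xi + 2*h)
      (by linarith : xi - h < xi) (by linarith : xi < xi + h)
    have hω : |(xi - (xi - h)) * (xi - (xi + h))| = h^2 := by
      have : (xi - (xi - h)) * (xi - (xi + h)) = -(h^2) := by ring
      rw [this, abs_neg, abs_of_nonneg h2pos.le]
    rw [hω] at hl
    have key : z (xi - h) - 2*(z xi) + z (xi + h)
        = -2*(z xi - (z (xi - h) * (xi - (xi + h))/((xi - h) - (xi + h))
            + z (xi + h) * (xi - (xi - h))/((xi + h) - (xi - h)))) := by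
      rw [show (xi - h) - (xi + h) = -(2*h) from by ring,
        show (xi + h) - (xi - h) = 2*h from by ring]
      field_simp
      ring
    rw [key, abs_mul, show |(-2:ℝ)| = 2 by norm_num]
    linarith
  have hΔR : |z xi - 2*(z (xi + h)) + z (xi + 2*h)| ≤ M2*h^2 := by
    have hl := lin_interp_bound hz2 hM2
      (by linarith : xi - h ≤ xi) (le_refl (xi + 2*h))
      (by linarith : xi < xi + h) (by linarith : xi + h < xi + 2*h)
    have hω : |((xi + h) - xi) * ((xi + h) - (xi + 2*h))| = h^2 := by
      have : ((xi + h) - xi) * ((xi + h) - (xi + 2*h)) = -(h^2) := by ring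
      rw [this, abs_neg, abs_of_nonneg h2pos.le]
    rw [hω] at hl
    have key : z xi - 2*(z (xi + h)) + z (xi + 2*h)
        = -2*(z (xi + h) - (z xi * ((xi + h) - (xi + 2*h))/(xi - (xi + 2*h))
            + z (xi + 2*h) * ((xi + h) - xi)/((xi + 2*h) - xi))) := by
      rw [show xi - (xi + 2*h) = -(2*h) from by ring,
        show (xi + 2*h) - xi = 2*h from by ring]
      field_simp
      ring
    rw [key, abs_mul, show |(-2:ℝ)| = 2 by norm_num]
    linarith
  -- error bounds
  have b5 : |((3/4 + 2*C1)*(z xi + z (xi + h))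
        + (1/4 - 2*C1)*(3*(z xi) - z (xi - h)))/2 - z (xi + h/2)|
      ≤ (1/16)*M3*h^3 + |C1| * M2 * h^2 := by
    have hsplit : ((3/4 + 2*C1)*(z xi + z (xi + h))
          + (1/4 - 2*C1)*(3*(z xi) - z (xi - h)))/2 - z (xi + h/2)
        = -(z (xi + h/2) - ((-(z (xi - h)) + 6*(z xi) + 3*(z (xi + h)))/8))
          + C1*(z (xi - h) - 2*(z xi) + z (xi + h)) := by ring
    rw [hsplit]
    calc |_ + C1*(z (xi - h) - 2*(z xi) + z (xi + h))|
        ≤ |-(z (xi + h/2) - ((-(z (xi - h)) + 6*(z xi) + 3*(z (xi + h)))/8))|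
          + |C1*(z (xi - h) - 2*(z xi) + z (xi + h))| := abs_add_le _ _
      _ = |z (xi + h/2) - ((-(z (xi - h)) + 6*(z xi) + 3*(z (xi + h)))/8)|
          + |C1| * |z (xi - h) - 2*(z xi) + z (xi + h)| := by rw [abs_neg, abs_mul]
      _ ≤ (1/16)*M3*h^3 + |C1| * (M2*h^2) :=
          add_le_add hqL (mul_le_mul_of_nonneg_left hΔL (abs_nonneg _))
      _ = (1/16)*M3*h^3 + |C1| * M2 * h^2 := by ring
  have b6 : |((1/4 - 2*C2)*(3*(z (xi + h)) - z (xi + 2*h))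
        + (3/4 + 2*C2)*(z xi + z (xi + h)))/2 - z (xi + h/2)|
      ≤ (1/16)*M3*h^3 + |C2| * M2 * h^2 := by
    have hsplit : ((1/4 - 2*C2)*(3*(z (xi + h)) - z (xi + 2*h))
          + (3/4 + 2*C2)*(z xi + z (xi + h)))/2 - z (xi + h/2)
        = -(z (xi + h/2) - ((3*(z xi) + 6*(z (xi + h)) - z (xi + 2*h))/8))
          + C2*(z xi - 2*(z (xi + h)) + z (xi + 2*h)) := by ring
    rw [hsplit]
    calc |_ + C2*(z xi - 2*(z (xi + h)) + z (xi + 2*h))|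
        ≤ |-(z (xi + h/2) - ((3*(z xi) + 6*(z (xi + h)) - z (xi + 2*h))/8))|
          + |C2*(z xi - 2*(z (xi + h)) + z (xi + 2*h))| := abs_add_le _ _
      _ = |z (xi + h/2) - ((3*(z xi) + 6*(z (xi + h)) - z (xi + 2*h))/8)|
          + |C2| * |z xi - 2*(z (xi + h)) + z (xi + 2*h)| := by rw [abs_neg, abs_mul]
      _ ≤ (1/16)*M3*h^3 + |C2| * (M2*h^2) :=
          add_le_add hqR (mul_le_mul_of_nonneg_left hΔR (abs_nonneg _))
      _ = (1/16)*M3*h^3 + |C2| * M2 * h^2 := by ring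
  have hM2nn : 0 ≤ M2 := by
    have := hM2 xi ⟨by linarith, by linarith⟩
    exact le_trans (abs_nonneg _) this
  refine ⟨by ring, by ring, eq3, eq4, b5, b6, ?_⟩
  intro K hK hC1 hC2
  have hM2h2 : 0 ≤ M2 * h^2 := mul_nonneg hM2nn h2pos.le
  constructor
  · calc _ ≤ (1/16)*M3*h^3 + |C1| * M2 * h^2 := b5
      _ ≤ (1/16)*M3*h^3 + (K*h) * (M2 * h^2) := by
          have : |C1| * (M2 * h^2) ≤ (K*h) * (M2 * h^2) :=
            mul_le_mul_of_nonneg_right hC1 hM2h2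
          nlinarith [this]
      _ = (M3/16 + K*M2)*h^3 := by ring
  · calc _ ≤ (1/16)*M3*h^3 + |C2| * M2 * h^2 := b6
      _ ≤ (1/16)*M3*h^3 + (K*h) * (M2 * h^2) := by
          have : |C2| * (M2 * h^2) ≤ (K*h) * (M2 * h^2) :=
            mul_le_mul_of_nonneg_right hC2 hM2h2
          nlinarith [this]
      _ = (M3/16 + K*M2)*h^3 := by ring
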